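/- Let m ≥ 1 and let ξ_1, ..., ξ_m ∈ ℂ satisfy ξ_j^m = 1 for each j. Let ω ∈ ℝ^d, α_1, ..., α_m ∈ ℂ, and v(x) = Σ_{j=1}^m α_j e^{i ξ_j ω·x}. Then pointwise on ℝ^d one has Σ_{j_1,...,j_m=1}^d |∂^m v/∂x_{j_1}⋯∂x_{j_m}|² = |ω|^{2m} |v|². -/

import Mathlib

open MeasureTheory

noncomputable section

/-- Euclidean space `ℝ^d`. -/
abbrev Euc (d : ℕ) := EuclideanSpace ℝ (Fin d)

/-- Partial derivative in the `j`-th coordinate direction. -/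
def pderivI {d : ℕ} (j : Fin d) (u : Euc d → ℂ) : Euc d → ℂ :=
  fun x => fderiv ℝ u x (EuclideanSpace.single j 1)

/-- Iterated partial derivative `∂^m u/∂x_{j_1}⋯∂x_{j_m}` along a list of directions. -/
def pderivSeq {d : ℕ} (js : List (Fin d)) (u : Euc d → ℂ) : Euc d → ℂ :=
  js.foldr pderivI u

/-- The Laplacian `Δu = Σ_{i=1}^d ∂²u/∂x_i²`. -/
def lap {d : ℕ} (u : Euc d → ℂ) : Euc d → ℂ :=
  fun x => ∑ i : Fin d, pderivI i (pderivI i u) x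

/-- The operator `-Δ`; its `m`-fold iterate `negLap^[m]` is `(-Δ)^m`. -/
def negLap {d : ℕ} (u : Euc d → ℂ) : Euc d → ℂ :=
  fun x => -(lap u x)

/-- The exponential function `x ↦ e^{ζ ω·x}`, where `ω·x = Σ_i ω_i x_i`. -/
def expFun {d : ℕ} (ζ : ℂ) (ω : Euc d) : Euc d → ℂ :=
  fun x => Complex.exp (ζ * ((∑ i : Fin d, ω i * x i : ℝ) : ℂ))

lemma hasFDerivAt_expFun {d : ℕ} (ζ : ℂ) (ω : Euc d) (x : Euc d) :
    HasFDerivAt (expFun ζ ω)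
      ((ζ * expFun ζ ω x) • (Complex.ofRealCLM.comp (innerSL ℝ ω))) x := by
  have h1 : (fun y : Euc d => ζ * ((∑ i : Fin d, ω i * y i : ℝ) : ℂ))
      = ⇑(ζ • (Complex.ofRealCLM.comp (innerSL ℝ ω))) := by
    ext y
    simp [PiLp.inner_apply, RCLike.inner_apply, mul_comm]
  have hlin : HasFDerivAt (fun y : Euc d => ζ * ((∑ i : Fin d, ω i * y i : ℝ) : ℂ))
      (ζ • (Complex.ofRealCLM.comp (innerSL ℝ ω))) x := by
    rw [h1]; exact (ζ • (Complex.ofRealCLM.comp (innerSL ℝ ω))).hasFDerivAt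
  have := (Complex.hasDerivAt_exp (ζ * ((∑ i : Fin d, ω i * x i : ℝ) : ℂ))).comp_hasFDerivAt x hlin
  have h2 : (ζ * expFun ζ ω x) • (Complex.ofRealCLM.comp (innerSL ℝ ω))
      = Complex.exp (ζ * ((∑ i : Fin d, ω i * x i : ℝ) : ℂ)) •
        ζ • (Complex.ofRealCLM.comp (innerSL ℝ ω)) := by
    rw [smul_smul, expFun, mul_comm]
  rw [h2]
  exact this

lemma key {d n : ℕ} (ζ : Fin n → ℂ) (ω : Euc d) (α : Fin n → ℂ) (js : List (Fin d)) :
    pderivSeq js (fun x => ∑ j, α j * expFun (ζ j) ω x)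
      = fun x => ∑ j, α j * (js.map fun k => ζ j * ω k).prod * expFun (ζ j) ω x := by
  induction js with
  | nil => simp [pderivSeq]
  | cons k t ih =>
      have : pderivSeq (k :: t) (fun x => ∑ j, α j * expFun (ζ j) ω x)
          = pderivI k (pderivSeq t (fun x => ∑ j, α j * expFun (ζ j) ω x)) := rfl
      rw [this, ih]
      funext x
      have hF : HasFDerivAt (fun x : Euc d => ∑ j, α j * (t.map fun k => ζ j * ω k).prod * expFun (ζ j) ω x)
          (∑ j, (α j * (t.map fun k => ζ j * ω k).prod) •
            ((ζ j * expFun (ζ j) ω x) • (Complex.ofRealCLM.comp (innerSL ℝ ω)))) x := by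
        apply HasFDerivAt.fun_sum
        intro j _
        exact (hasFDerivAt_expFun (ζ j) ω x).const_mul _
      rw [pderivI, hF.fderiv]
      simp only [ContinuousLinearMap.sum_apply, ContinuousLinearMap.smul_apply,
        ContinuousLinearMap.comp_apply, Complex.ofRealCLM_apply, innerSL_apply_apply, smul_eq_mul]
      refine Finset.sum_congr rfl fun j _ => ?_
      have hinner : inner ℝ ω (EuclideanSpace.single k (1 : ℝ)) = ω k := by
        simp [EuclideanSpace.inner_single_right]
      rw [hinner]
      simp only [List.map_cons, List.prod_cons]
      ring

/-- If `ξ_1, …, ξ_m` satisfy `ξ_j^m = 1` and `v = Σ_j α_j e^{i ξ_j ω·x}`, then pointwise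
`Σ_{j_1,…,j_m} |∂^m v/∂x_{j_1}⋯∂x_{j_m}|² = |ω|^{2m} |v|²`. -/
theorem hessian_energy_of_expFun_sum
    (d m : ℕ) (hm : 1 ≤ m) (ξ : Fin m → ℂ) (hξ : ∀ j, ξ j ^ m = 1)
    (ω : Euc d) (α : Fin m → ℂ)
    (v : Euc d → ℂ) (hv : v = fun x => ∑ j : Fin m, α j * expFun (Complex.I * ξ j) ω x) :
    ∀ x : Euc d, ∑ js : Fin m → Fin d, ‖pderivSeq (List.ofFn js) v x‖ ^ 2
      = ‖ω‖ ^ (2 * m) * ‖v x‖ ^ 2 := by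
  intro x
  have hps : ∀ js : Fin m → Fin d, pderivSeq (List.ofFn js) v x
      = Complex.I ^ m * ((∏ k : Fin m, ω (js k) : ℝ) : ℂ) * v x := by
    intro js
    rw [hv, key]
    have hprod : ∀ j, ((List.ofFn js).map fun k => Complex.I * ξ j * ω k).prod
        = Complex.I ^ m * ((∏ k : Fin m, ω (js k) : ℝ) : ℂ) := by
      intro j
      rw [List.map_ofFn, List.prod_ofFn]
      have : ∀ k : Fin m, ((fun k => Complex.I * ξ j * ((ω k : ℝ) : ℂ)) ∘ js) k
          = (Complex.I * ξ j) * ((ω (js k) : ℝ) : ℂ) := fun k => rfl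
      simp only [this, Finset.prod_mul_distrib, Finset.prod_const, Finset.card_univ,
        Fintype.card_fin, mul_pow, hξ j, mul_one]
      push_cast
      ring
    simp only [hprod]
    rw [Finset.mul_sum]
    exact Finset.sum_congr rfl fun j _ => by ring
  have hnormsq : ∀ js : Fin m → Fin d, ‖pderivSeq (List.ofFn js) v x‖ ^ 2
      = (∏ k : Fin m, ω (js k) ^ 2) * ‖v x‖ ^ 2 := by
    intro js
    rw [hps js]
    rw [norm_mul, norm_mul, norm_pow, Complex.norm_I, one_pow, one_mul,
      Complex.norm_real, mul_pow, Real.norm_eq_abs, sq_abs, ← Finset.prod_pow]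
  simp only [hnormsq]
  rw [← Finset.sum_mul]
  congr 1
  have h1 : (∑ js : Fin m → Fin d, ∏ k : Fin m, ω (js k) ^ 2)
      = (∑ i : Fin d, ω i ^ 2) ^ m := (Fintype.sum_pow (fun i => ω i ^ 2) m).symm
  have h2 : ‖ω‖ ^ 2 = ∑ i : Fin d, ω i ^ 2 := by
    rw [← real_inner_self_eq_norm_sq]
    simp only [PiLp.inner_apply, RCLike.inner_apply, conj_trivial, sq]
  rw [h1, pow_mul, h2]
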